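/- Let N ≥ 1 and define f_N(x) := ∫_0^∞ ∫_0^∞ exp(−r−s) · (4x² + 4x(r+s) + (r−s)²)^N dr ds for real x > 0. Then f_N is differentiable on (0, ∞) and satisfies the inhomogeneous first-order differential equation f_N′(x) = (1 + N/x + 1/(2x)) · f_N(x) − (1/(2x)) · e^{2x} · Γ(2N+2, 2x), where Γ(a, t) := ∫_t^∞ u^{a−1} e^{−u} du is the upper incomplete Gamma function. -/

import Mathlib

open MeasureTheory Finset

/-- The two-dimensional Laplace-type integral `f_N(x)` arising from the pair of
conjugate characteristic polynomials of the class AII† ensemble. -/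
noncomputable def fAII (N : ℕ) (x : ℝ) : ℝ :=
  ∫ r in Set.Ioi (0 : ℝ), ∫ s in Set.Ioi (0 : ℝ),
    Real.exp (-r - s) * (4 * x ^ 2 + 4 * x * (r + s) + (r - s) ^ 2) ^ N

/-- The upper incomplete Gamma function `Γ(a,t) = ∫_t^∞ u^{a−1} e^{−u} du`. -/
noncomputable def upperGamma (a t : ℝ) : ℝ :=
  ∫ u in Set.Ioi t, u ^ (a - 1) * Real.exp (-u)

open Real Set Filter

private noncomputable abbrev mu2 : Measure (ℝ × ℝ) :=
  (volume.restrict (Set.Ioi (0:ℝ))).prod (volume.restrict (Set.Ioi (0:ℝ)))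

private lemma intExpPow (k : ℕ) :
    IntegrableOn (fun r : ℝ => Real.exp (-r) * r ^ k) (Set.Ioi 0) := by
  have h := Real.GammaIntegral_convergent (show (0:ℝ) < k + 1 by positivity)
  refine h.congr_fun (fun r _ => ?_) measurableSet_Ioi
  rw [show ((k:ℝ)+1-1) = (k:ℝ) by ring]; simp only [Real.rpow_natCast]

private lemma intExpOnePow (m : ℕ) :
    IntegrableOn (fun r : ℝ => Real.exp (-r) * (1 + r) ^ m) (Set.Ioi 0) := by
  have h : (fun r : ℝ => Real.exp (-r) * (1 + r) ^ m)
      = fun r => ∑ k ∈ range (m+1), (m.choose k : ℝ) * (Real.exp (-r) * r ^ k) := by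
    funext r
    rw [add_comm (1:ℝ) r, add_pow]
    rw [Finset.mul_sum]
    refine Finset.sum_congr rfl fun k _ => by ring
  rw [h]
  exact integrable_finset_sum _ fun k _ => (intExpPow k).const_mul _

private lemma aux1D {g : ℝ → ℝ} (hg : Continuous g) {C : ℝ} {m : ℕ}
    (hb : ∀ r : ℝ, 0 ≤ r → |g r| ≤ C * (1 + r) ^ m) :
    IntegrableOn (fun r => Real.exp (-r) * g r) (Set.Ioi 0) := by
  refine Integrable.mono' ((intExpOnePow m).const_mul C) ?_ ?_
  · exact ((Real.continuous_exp.comp continuous_neg).mul hg).aestronglyMeasurable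
  · filter_upwards [ae_restrict_mem measurableSet_Ioi] with r hr
    have h1 : ‖Real.exp (-r) * g r‖ = Real.exp (-r) * |g r| := by
      rw [norm_mul, Real.norm_eq_abs, abs_of_pos (Real.exp_pos _), Real.norm_eq_abs]
    rw [h1]
    calc Real.exp (-r) * |g r| ≤ Real.exp (-r) * (C * (1+r)^m) :=
          mul_le_mul_of_nonneg_left (hb r hr.le) (Real.exp_pos _).le
      _ = C * (Real.exp (-r) * (1+r)^m) := by ring

private lemma aux2D {g : ℝ → ℝ → ℝ} (hg : Continuous fun p : ℝ × ℝ => g p.1 p.2) {C : ℝ} {m : ℕ}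
    (hb : ∀ r s : ℝ, 0 ≤ r → 0 ≤ s → |g r s| ≤ C * ((1+r)^m * (1+s)^m)) :
    Integrable (fun p : ℝ × ℝ => Real.exp (-p.1 - p.2) * g p.1 p.2)
      mu2 := by
  have hdom : Integrable (fun p : ℝ × ℝ =>
      C * ((Real.exp (-p.1) * (1+p.1)^m) * (Real.exp (-p.2) * (1+p.2)^m)))
      mu2 :=
    ((intExpOnePow m).mul_prod (intExpOnePow m)).const_mul C
  refine hdom.mono' ?_ ?_
  · refine Continuous.aestronglyMeasurable ?_
    exact (Real.continuous_exp.comp (continuous_fst.neg.sub continuous_snd)).mul hg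
  · unfold mu2
    rw [Measure.prod_restrict]
    filter_upwards [ae_restrict_mem (measurableSet_Ioi.prod measurableSet_Ioi)] with p hp
    obtain ⟨hr, hs⟩ : p.1 ∈ Set.Ioi (0:ℝ) ∧ p.2 ∈ Set.Ioi (0:ℝ) := hp
    have h1 : ‖Real.exp (-p.1 - p.2) * g p.1 p.2‖ = Real.exp (-p.1 - p.2) * |g p.1 p.2| := by
      rw [norm_mul, Real.norm_eq_abs, abs_of_pos (Real.exp_pos _), Real.norm_eq_abs]
    rw [h1]
    calc Real.exp (-p.1 - p.2) * |g p.1 p.2|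
        ≤ Real.exp (-p.1 - p.2) * (C * ((1+p.1)^m * (1+p.2)^m)) :=
          mul_le_mul_of_nonneg_left (hb p.1 p.2 hr.le hs.le) (Real.exp_pos _).le
      _ = C * (Real.exp (-p.1) * (1+p.1)^m * (Real.exp (-p.2) * (1+p.2)^m)) := by
          rw [show -p.1 - p.2 = -p.1 + -p.2 by ring, Real.exp_add]; ring

private noncomputable def Pq (x r s : ℝ) : ℝ := 4*x^2 + 4*x*(r+s) + (r-s)^2

private lemma Pq_nonneg {x r s : ℝ} (hx : 0 ≤ x) (hr : 0 ≤ r) (hs : 0 ≤ s) :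
    0 ≤ Pq x r s := by unfold Pq; nlinarith [sq_nonneg (r-s), sq_nonneg x]

private lemma Pq_le {x B r s : ℝ} (hx : 0 ≤ x) (hxB : x ≤ B) (hr : 0 ≤ r) (hs : 0 ≤ s) :
    Pq x r s ≤ (2*B+1)^2 * ((1+r)*(1+s))^2 := by
  unfold Pq
  nlinarith [sq_nonneg (r-s), sq_nonneg (r+s), mul_nonneg hr hs, sq_nonneg (2*B + (r+s)),
    mul_nonneg (mul_nonneg hr hs) (mul_nonneg hr hs), sq_nonneg B, mul_nonneg hx hr,
    mul_nonneg hx hs, mul_nonneg (mul_nonneg hr hs) hx, sq_nonneg (B*(r+s)),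
    mul_nonneg (mul_nonneg hr hs) (add_nonneg hr hs), sq_nonneg (r*s), mul_nonneg (sq_nonneg B) (mul_nonneg hr hs)]

private lemma Pq_pow_le {x B r s : ℝ} (hx : 0 ≤ x) (hxB : x ≤ B) (hr : 0 ≤ r) (hs : 0 ≤ s)
    (k : ℕ) : Pq x r s ^ k ≤ ((2*B+1)^2)^k * ((1+r)*(1+s))^(2*k) := by
  calc Pq x r s ^ k ≤ ((2*B+1)^2 * ((1+r)*(1+s))^2)^k :=
        pow_le_pow_left₀ (Pq_nonneg hx hr hs) (Pq_le hx hxB hr hs) k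
    _ = ((2*B+1)^2)^k * ((1+r)*(1+s))^(2*k) := by
        rw [mul_pow, ← pow_mul ((1+r)*(1+s)) 2 k]

private lemma atom2D {x : ℝ} (hx : 0 ≤ x) (a b k : ℕ) :
    Integrable (fun p : ℝ × ℝ => Real.exp (-p.1 - p.2) *
      ((p.1 - p.2)^a * (p.1 + p.2)^b * Pq x p.1 p.2 ^ k))
      mu2 := by
  refine aux2D (g := fun r s => (r - s)^a * (r + s)^b * Pq x r s ^ k) (C := ((2*x+1)^2)^k) (m := a + b + 2*k) ?_ ?_
  · unfold Pq; fun_prop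
  · intro r s hr hs
    have hT1 : (1:ℝ) ≤ (1+r)*(1+s) := by nlinarith
    have h1 : |r - s| ≤ (1+r)*(1+s) := by
      rw [abs_le]; constructor <;> nlinarith [mul_nonneg hr hs]
    have h2 : r + s ≤ (1+r)*(1+s) := by nlinarith [mul_nonneg hr hs]
    have h3 : Pq x r s ^ k ≤ ((2*x+1)^2)^k * ((1+r)*(1+s))^(2*k) :=
      Pq_pow_le hx le_rfl hr hs k
    have habs : |(r - s)^a * (r + s)^b * Pq x r s ^ k|
        = |r - s|^a * (r + s)^b * Pq x r s ^ k := by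
      rw [abs_mul, abs_mul, abs_pow, abs_pow, abs_pow, abs_of_nonneg (add_nonneg hr hs),
        abs_of_nonneg (Pq_nonneg hx hr hs)]
    rw [habs]
    have hb1 : |r - s|^a ≤ ((1+r)*(1+s))^a := pow_le_pow_left₀ (abs_nonneg _) h1 a
    have hb2 : (r + s)^b ≤ ((1+r)*(1+s))^b := pow_le_pow_left₀ (add_nonneg hr hs) h2 b
    have hTn : (0:ℝ) ≤ (1+r)*(1+s) := by linarith
    calc |r - s|^a * (r + s)^b * Pq x r s ^ k
        ≤ ((1+r)*(1+s))^a * ((1+r)*(1+s))^b * (((2*x+1)^2)^k * ((1+r)*(1+s))^(2*k)) := by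
          exact mul_le_mul (mul_le_mul hb1 hb2 (pow_nonneg (add_nonneg hr hs) b)
            (by positivity)) h3 (pow_nonneg (Pq_nonneg hx hr hs) k) (by positivity)
      _ = ((2*x+1)^2)^k * ((1+r)^(a+b+2*k) * (1+s)^(a+b+2*k)) := by
          rw [mul_pow, mul_pow, mul_pow]; ring

private lemma intOn_congr {g h : ℝ → ℝ} {s : Set ℝ} (hi : IntegrableOn h s)
    (he : ∀ r, g r = h r) : IntegrableOn g s :=
  hi.congr (ae_of_all _ fun r => (he r).symm)

private lemma int_congr {μ : Measure (ℝ × ℝ)} {g h : ℝ × ℝ → ℝ} (hi : Integrable h μ)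
    (he : ∀ p, g p = h p) : Integrable g μ :=
  hi.congr (ae_of_all _ fun p => (he p).symm)

private lemma atom1D {x s : ℝ} (hx : 0 ≤ x) (hs : 0 ≤ s) (c d : ℝ) (a b k : ℕ) :
    IntegrableOn (fun r : ℝ => Real.exp (-r) * ((c + r)^a * (d + r)^b * Pq x r s ^ k))
      (Set.Ioi 0) := by
  refine aux1D (g := fun r => (c + r)^a * (d + r)^b * Pq x r s ^ k)
    (C := (1+|c|)^a * (1+|d|)^b * (((2*x+1)^2)^k * (1+s)^(2*k))) (m := a + b + 2*k) ?_ ?_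
  · unfold Pq; fun_prop
  · intro r hr
    have h1 : |c + r| ≤ (1+|c|) * (1+r) := by
      calc |c + r| ≤ |c| + r := by rw [abs_le]; constructor <;> cases abs_cases c <;> nlinarith
        _ ≤ (1+|c|)*(1+r) := by nlinarith [abs_nonneg c]
    have h2 : |d + r| ≤ (1+|d|) * (1+r) := by
      calc |d + r| ≤ |d| + r := by rw [abs_le]; constructor <;> cases abs_cases d <;> nlinarith
        _ ≤ (1+|d|)*(1+r) := by nlinarith [abs_nonneg d]
    have h3 : Pq x r s ^ k ≤ ((2*x+1)^2)^k * ((1+r)*(1+s))^(2*k) :=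
      Pq_pow_le hx le_rfl hr hs k
    have habs : |(c + r)^a * (d + r)^b * Pq x r s ^ k|
        = |c + r|^a * |d + r|^b * Pq x r s ^ k := by
      rw [abs_mul, abs_mul, abs_pow, abs_pow, abs_pow, abs_of_nonneg (Pq_nonneg hx hr hs)]
    rw [habs]
    have hb1 : |c + r|^a ≤ ((1+|c|)*(1+r))^a := pow_le_pow_left₀ (abs_nonneg _) h1 a
    have hb2 : |d + r|^b ≤ ((1+|d|)*(1+r))^b := pow_le_pow_left₀ (abs_nonneg _) h2 b
    calc |c + r|^a * |d + r|^b * Pq x r s ^ k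
        ≤ ((1+|c|)*(1+r))^a * ((1+|d|)*(1+r))^b
            * (((2*x+1)^2)^k * ((1+r)*(1+s))^(2*k)) :=
          mul_le_mul (mul_le_mul hb1 hb2 (pow_nonneg (abs_nonneg _) b) (by positivity)) h3
            (pow_nonneg (Pq_nonneg hx hr hs) k) (by positivity)
      _ = (1+|c|)^a * (1+|d|)^b * (((2*x+1)^2)^k * (1+s)^(2*k)) * (1 + r)^(a+b+2*k) := by
          rw [mul_pow, mul_pow, mul_pow]; ring

private lemma tendstoHelper {h : ℝ → ℝ} (C : ℝ) (m : ℕ) (hb : ∀ r, 0 ≤ r → |h r| ≤ C*(1+r)^m) :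
    Tendsto (fun r => Real.exp (-r) * h r) atTop (nhds 0) := by
  have g0 : Tendsto (fun r : ℝ => C * Real.exp 1 * ((1+r)^m * Real.exp (-(1+r)))) atTop (nhds 0) := by
    have := ((tendsto_pow_mul_exp_neg_atTop_nhds_zero m).comp
      (tendsto_atTop_add_const_left atTop 1 tendsto_id)).const_mul (C * Real.exp 1)
    simpa using this
  refine squeeze_zero_norm' ?_ g0
  filter_upwards [eventually_ge_atTop (0:ℝ)] with r hr
  have : ‖Real.exp (-r) * h r‖ = Real.exp (-r) * |h r| := by
    rw [norm_mul, Real.norm_eq_abs, abs_of_pos (Real.exp_pos _), Real.norm_eq_abs]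
  rw [this]
  have he : Real.exp (-r) = Real.exp 1 * Real.exp (-(1+r)) := by
    rw [← Real.exp_add]; ring_nf
  calc Real.exp (-r) * |h r| ≤ Real.exp (-r) * (C*(1+r)^m) :=
        mul_le_mul_of_nonneg_left (hb r hr) (Real.exp_pos _).le
    _ = C * Real.exp 1 * ((1+r)^m * Real.exp (-(1+r))) := by rw [he]; ring

private lemma hasDerivAt_Pq_r (x s r : ℝ) :
    HasDerivAt (fun r => Pq x r s) (4*x + 2*(r-s)) r := by
  have h1 : HasDerivAt (fun r : ℝ => 4*x*(r+s)) (4*x) r := by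
    simpa using ((hasDerivAt_id r).add_const s).const_mul (4*x)
  have h2 : HasDerivAt (fun r : ℝ => (r-s)^2) (2*(r-s)) r := by
    simpa using ((hasDerivAt_id r).sub_const s).fun_pow 2
  have := ((hasDerivAt_const r (4*x^2)).add h1).add h2
  unfold Pq
  refine this.congr_deriv ?_
  ring

private lemma hasDerivAt_Pq_pow_r (x s : ℝ) (k : ℕ) (r : ℝ) :
    HasDerivAt (fun r => Pq x r s ^ (k+1)) (((k:ℝ)+1) * Pq x r s ^ k * (4*x + 2*(r-s))) r := by
  have := (hasDerivAt_Pq_r x s r).fun_pow (k+1)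
  simpa using this

private lemma pqBound {x s : ℝ} (hx : 0 ≤ x) (hs : 0 ≤ s) (k : ℕ) :
    ∀ r : ℝ, 0 ≤ r → |Pq x r s ^ k| ≤ (((2*x+1)^2)^k * (1+s)^(2*k)) * (1+r)^(2*k) := by
  intro r hr
  rw [abs_of_nonneg (pow_nonneg (Pq_nonneg hx hr hs) k)]
  calc Pq x r s ^ k ≤ ((2*x+1)^2)^k * ((1+r)*(1+s))^(2*k) := Pq_pow_le hx le_rfl hr hs k
    _ = (((2*x+1)^2)^k * (1+s)^(2*k)) * (1+r)^(2*k) := by rw [mul_pow]; ring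

private lemma innerIBP1 {x s : ℝ} (hx : 0 ≤ x) (hs : 0 ≤ s) (M : ℕ) :
    ∫ r in Set.Ioi (0:ℝ), Real.exp (-r) * (((M:ℝ)+1) * Pq x r s ^ M * (4*x + 2*(r-s)))
      = (∫ r in Set.Ioi (0:ℝ), Real.exp (-r) * Pq x r s ^ (M+1)) - ((2*x+s)^2)^(M+1) := by
  have i1 : IntegrableOn (fun r => Real.exp (-r) * Pq x r s ^ (M+1)) (Set.Ioi 0) :=
    intOn_congr (atom1D hx hs 0 0 0 0 (M+1)) (fun r => by ring)
  have i2 : IntegrableOn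
      (fun r => Real.exp (-r) * (((M:ℝ)+1) * Pq x r s ^ M * (4*x + 2*(r-s)))) (Set.Ioi 0) :=
    intOn_congr (((atom1D hx hs 0 0 0 0 M).const_mul (4*x*((M:ℝ)+1))).add
      ((atom1D hx hs (-s) 0 1 0 M).const_mul (2*((M:ℝ)+1))))
      (fun r => by simp only [Pi.add_apply]; ring)
  have hderiv : ∀ r ∈ Set.Ici (0:ℝ),
      HasDerivAt (fun r => -(Real.exp (-r) * Pq x r s ^ (M+1)))
        (Real.exp (-r) * Pq x r s ^ (M+1)
          - Real.exp (-r) * (((M:ℝ)+1) * Pq x r s ^ M * (4*x + 2*(r-s)))) r := by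
    intro r _
    have hexp : HasDerivAt (fun r : ℝ => Real.exp (-r)) (Real.exp (-r) * (-1)) r :=
      (hasDerivAt_id r).neg.exp
    have := (hexp.mul (hasDerivAt_Pq_pow_r x s M r)).neg
    refine this.congr_deriv ?_
    ring
  have htend : Tendsto (fun r => -(Real.exp (-r) * Pq x r s ^ (M+1))) atTop (nhds 0) := by
    have := (tendstoHelper _ _ (pqBound hx hs (M+1))).neg
    simpa using this
  have key := integral_Ioi_of_hasDerivAt_of_tendsto' hderiv (i1.sub i2) htend
  rw [MeasureTheory.integral_sub i1 i2] at key
  have h0 : -(Real.exp (-(0:ℝ)) * Pq x 0 s ^ (M+1)) = -((2*x+s)^2)^(M+1) := by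
    rw [show Pq x 0 s = (2*x+s)^2 by unfold Pq; ring]
    simp
  rw [h0] at key
  linarith [key]

private lemma innerIBP2 {x s : ℝ} (hx : 0 ≤ x) (hs : 0 ≤ s) (M : ℕ) :
    ∫ r in Set.Ioi (0:ℝ),
        Real.exp (-r) * ((r - s) * (((M:ℝ)+1) * Pq x r s ^ M * (4*x + 2*(r-s))))
      = (∫ r in Set.Ioi (0:ℝ), Real.exp (-r) * ((r - s) * Pq x r s ^ (M+1)))
        - (∫ r in Set.Ioi (0:ℝ), Real.exp (-r) * Pq x r s ^ (M+1))
        + s * ((2*x+s)^2)^(M+1) := by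
  have i1 : IntegrableOn (fun r => Real.exp (-r) * Pq x r s ^ (M+1)) (Set.Ioi 0) :=
    intOn_congr (atom1D hx hs 0 0 0 0 (M+1)) (fun r => by ring)
  have j1 : IntegrableOn (fun r => Real.exp (-r) * ((r - s) * Pq x r s ^ (M+1))) (Set.Ioi 0) :=
    intOn_congr (atom1D hx hs (-s) 0 1 0 (M+1)) (fun r => by ring)
  have iL : IntegrableOn (fun r => Real.exp (-r) *
      ((r - s) * (((M:ℝ)+1) * Pq x r s ^ M * (4*x + 2*(r-s))))) (Set.Ioi 0) :=
    intOn_congr (((atom1D hx hs (-s) 0 1 0 M).const_mul (4*x*((M:ℝ)+1))).add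
      ((atom1D hx hs (-s) 0 2 0 M).const_mul (2*((M:ℝ)+1))))
      (fun r => by simp only [Pi.add_apply]; ring)
  have hderiv : ∀ r ∈ Set.Ici (0:ℝ),
      HasDerivAt (fun r => -(Real.exp (-r) * ((r - s) * Pq x r s ^ (M+1))))
        ((Real.exp (-r) * ((r - s) * Pq x r s ^ (M+1))
          - Real.exp (-r) * Pq x r s ^ (M+1))
          - Real.exp (-r) * ((r - s) * (((M:ℝ)+1) * Pq x r s ^ M * (4*x + 2*(r-s))))) r := by
    intro r _
    have hexp : HasDerivAt (fun r : ℝ => Real.exp (-r)) (Real.exp (-r) * (-1)) r :=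
      (hasDerivAt_id r).neg.exp
    have hprod : HasDerivAt (fun r => (r - s) * Pq x r s ^ (M+1))
        (1 * Pq x r s ^ (M+1) + (r - s) * (((M:ℝ)+1) * Pq x r s ^ M * (4*x + 2*(r-s)))) r :=
      ((hasDerivAt_id r).sub_const s).mul (hasDerivAt_Pq_pow_r x s M r)
    have := (hexp.mul hprod).neg
    refine this.congr_deriv ?_
    ring
  have htend : Tendsto (fun r => -(Real.exp (-r) * ((r - s) * Pq x r s ^ (M+1)))) atTop
      (nhds 0) := by
    have hb : ∀ r, 0 ≤ r → |(r - s) * Pq x r s ^ (M+1)|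
        ≤ ((1+s) * (((2*x+1)^2)^(M+1) * (1+s)^(2*(M+1)))) * (1+r)^(2*(M+1)+1) := by
      intro r hr
      rw [abs_mul]
      have h1 := pqBound hx hs (M+1) r hr
      have h2 : |r - s| ≤ (1+s)*(1+r) := by
        rw [abs_le]; constructor <;> nlinarith [mul_nonneg hr hs]
      calc |r - s| * |Pq x r s ^ (M+1)|
          ≤ ((1+s)*(1+r)) * ((((2*x+1)^2)^(M+1) * (1+s)^(2*(M+1))) * (1+r)^(2*(M+1))) :=
            mul_le_mul h2 h1 (abs_nonneg _) (by positivity)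
        _ = ((1+s) * (((2*x+1)^2)^(M+1) * (1+s)^(2*(M+1)))) * (1+r)^(2*(M+1)+1) := by ring
    have := (tendstoHelper _ _ hb).neg
    simpa using this
  have jsub : IntegrableOn (fun r => Real.exp (-r) * ((r - s) * Pq x r s ^ (M+1))
      - Real.exp (-r) * Pq x r s ^ (M+1)) (Set.Ioi 0) := j1.sub i1
  have key := integral_Ioi_of_hasDerivAt_of_tendsto' hderiv (jsub.sub iL) htend
  rw [MeasureTheory.integral_sub jsub iL, MeasureTheory.integral_sub j1 i1] at key
  have h0 : -(Real.exp (-(0:ℝ)) * ((0 - s) * Pq x 0 s ^ (M+1)))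
      = s * ((2*x+s)^2)^(M+1) := by
    rw [show Pq x 0 s = (2*x+s)^2 by unfold Pq; ring]
    simp
  rw [h0] at key
  linarith [key]

private lemma expSplit (s : ℝ) (g : ℝ → ℝ) :
    (∫ r in Set.Ioi (0:ℝ), Real.exp (-r - s) * g r)
      = Real.exp (-s) * ∫ r in Set.Ioi (0:ℝ), Real.exp (-r) * g r := by
  rw [← integral_const_mul]
  refine integral_congr_ae (ae_of_all _ fun r => ?_)
  show Real.exp (-r - s) * g r = Real.exp (-s) * (Real.exp (-r) * g r)
  rw [show -r - s = -s + -r by ring, Real.exp_add, mul_assoc]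

private lemma outer1 {x : ℝ} (hx : 0 ≤ x) (M : ℕ) :
    (∫ p : ℝ × ℝ, Real.exp (-p.1 - p.2) *
        (((M:ℝ)+1) * Pq x p.1 p.2 ^ M * (4*x + 2*(p.1-p.2)))
        ∂mu2)
      = (∫ p : ℝ × ℝ, Real.exp (-p.1 - p.2) * Pq x p.1 p.2 ^ (M+1)
          ∂mu2)
        - ∫ t in Set.Ioi (0:ℝ), Real.exp (-t) * ((2*x+t)^2)^(M+1) := by
  have hA : Integrable (fun p : ℝ × ℝ => Real.exp (-p.1 - p.2) * Pq x p.1 p.2 ^ (M+1))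
      mu2 :=
    int_congr (atom2D hx 0 0 (M+1)) (fun p => by ring)
  have hK : Integrable (fun p : ℝ × ℝ => Real.exp (-p.1 - p.2) *
      (((M:ℝ)+1) * Pq x p.1 p.2 ^ M * (4*x + 2*(p.1-p.2))))
      mu2 :=
    int_congr (((atom2D hx 0 0 M).const_mul (4*x*((M:ℝ)+1))).add
      ((atom2D hx 1 0 M).const_mul (2*((M:ℝ)+1))))
      (fun p => by simp only [Pi.add_apply]; ring)
  have hG : IntegrableOn (fun t : ℝ => Real.exp (-t) * ((2*x+t)^2)^(M+1)) (Set.Ioi 0) :=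
    intOn_congr (atom1D (x:=0) (s:=0) le_rfl le_rfl (2*x) 0 (2*M+2) 0 0) (fun t => by
      rw [show (2*x+t)^(2*M+2) = ((2*x+t)^2)^(M+1) by rw [show 2*M+2 = 2*(M+1) from by ring, pow_mul]]; ring)
  calc (∫ p : ℝ × ℝ, Real.exp (-p.1 - p.2) *
        (((M:ℝ)+1) * Pq x p.1 p.2 ^ M * (4*x + 2*(p.1-p.2)))
        ∂mu2)
      = ∫ s in Set.Ioi (0:ℝ), ∫ r in Set.Ioi (0:ℝ),
          Real.exp (-r - s) * (((M:ℝ)+1) * Pq x r s ^ M * (4*x + 2*(r-s))) :=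
        integral_prod_symm _ hK
    _ = ∫ s in Set.Ioi (0:ℝ),
          ((∫ r in Set.Ioi (0:ℝ), Real.exp (-r - s) * Pq x r s ^ (M+1))
            - Real.exp (-s) * ((2*x+s)^2)^(M+1)) := by
        refine setIntegral_congr_fun measurableSet_Ioi (fun s hs => ?_)
        rw [expSplit, innerIBP1 hx (le_of_lt hs) M, mul_sub, ← expSplit]
    _ = (∫ s in Set.Ioi (0:ℝ), ∫ r in Set.Ioi (0:ℝ),
          Real.exp (-r - s) * Pq x r s ^ (M+1))
        - ∫ t in Set.Ioi (0:ℝ), Real.exp (-t) * ((2*x+t)^2)^(M+1) :=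
        MeasureTheory.integral_sub hA.integral_prod_right hG
    _ = (∫ p : ℝ × ℝ, Real.exp (-p.1 - p.2) * Pq x p.1 p.2 ^ (M+1)
          ∂mu2)
        - ∫ t in Set.Ioi (0:ℝ), Real.exp (-t) * ((2*x+t)^2)^(M+1) := by
        rw [← integral_prod_symm _ hA]

private lemma outer2 {x : ℝ} (hx : 0 ≤ x) (M : ℕ) :
    (∫ p : ℝ × ℝ, Real.exp (-p.1 - p.2) *
        ((p.1 - p.2) * (((M:ℝ)+1) * Pq x p.1 p.2 ^ M * (4*x + 2*(p.1-p.2))))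
        ∂mu2)
      = ((∫ p : ℝ × ℝ, Real.exp (-p.1 - p.2) * ((p.1 - p.2) * Pq x p.1 p.2 ^ (M+1))
          ∂mu2)
        - (∫ p : ℝ × ℝ, Real.exp (-p.1 - p.2) * Pq x p.1 p.2 ^ (M+1)
          ∂mu2))
        + ∫ t in Set.Ioi (0:ℝ), Real.exp (-t) * (t * ((2*x+t)^2)^(M+1)) := by
  have hA : Integrable (fun p : ℝ × ℝ => Real.exp (-p.1 - p.2) * Pq x p.1 p.2 ^ (M+1))
      mu2 :=
    int_congr (atom2D hx 0 0 (M+1)) (fun p => by ring)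
  have hZ : Integrable (fun p : ℝ × ℝ =>
      Real.exp (-p.1 - p.2) * ((p.1 - p.2) * Pq x p.1 p.2 ^ (M+1)))
      mu2 :=
    int_congr (atom2D hx 1 0 (M+1)) (fun p => by ring)
  have hJ : Integrable (fun p : ℝ × ℝ => Real.exp (-p.1 - p.2) *
      ((p.1 - p.2) * (((M:ℝ)+1) * Pq x p.1 p.2 ^ M * (4*x + 2*(p.1-p.2)))))
      mu2 :=
    int_congr (((atom2D hx 1 0 M).const_mul (4*x*((M:ℝ)+1))).add
      ((atom2D hx 2 0 M).const_mul (2*((M:ℝ)+1))))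
      (fun p => by simp only [Pi.add_apply]; ring)
  have hG2 : IntegrableOn (fun t : ℝ => Real.exp (-t) * (t * ((2*x+t)^2)^(M+1)))
      (Set.Ioi 0) :=
    intOn_congr (atom1D (x:=0) (s:=0) le_rfl le_rfl 0 (2*x) 1 (2*M+2) 0) (fun t => by
      rw [show (2*x+t)^(2*M+2) = ((2*x+t)^2)^(M+1) by
        rw [show 2*M+2 = 2*(M+1) from by ring, pow_mul]]; ring)
  have hu : Integrable (fun s : ℝ => ∫ r in Set.Ioi (0:ℝ),
      Real.exp (-r - s) * ((r - s) * Pq x r s ^ (M+1))) (volume.restrict (Set.Ioi 0)) :=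
    hZ.integral_prod_right
  have hv : Integrable (fun s : ℝ => ∫ r in Set.Ioi (0:ℝ),
      Real.exp (-r - s) * Pq x r s ^ (M+1)) (volume.restrict (Set.Ioi 0)) :=
    hA.integral_prod_right
  have huv : Integrable (fun s : ℝ =>
      (∫ r in Set.Ioi (0:ℝ), Real.exp (-r - s) * ((r - s) * Pq x r s ^ (M+1)))
      - ∫ r in Set.Ioi (0:ℝ), Real.exp (-r - s) * Pq x r s ^ (M+1))
      (volume.restrict (Set.Ioi 0)) := hu.sub hv
  calc (∫ p : ℝ × ℝ, Real.exp (-p.1 - p.2) *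
        ((p.1 - p.2) * (((M:ℝ)+1) * Pq x p.1 p.2 ^ M * (4*x + 2*(p.1-p.2))))
        ∂mu2)
      = ∫ s in Set.Ioi (0:ℝ), ∫ r in Set.Ioi (0:ℝ),
          Real.exp (-r - s) * ((r - s) * (((M:ℝ)+1) * Pq x r s ^ M * (4*x + 2*(r-s)))) :=
        integral_prod_symm _ hJ
    _ = ∫ s in Set.Ioi (0:ℝ),
          (((∫ r in Set.Ioi (0:ℝ), Real.exp (-r - s) * ((r - s) * Pq x r s ^ (M+1)))
            - ∫ r in Set.Ioi (0:ℝ), Real.exp (-r - s) * Pq x r s ^ (M+1))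
            + Real.exp (-s) * (s * ((2*x+s)^2)^(M+1))) := by
        refine setIntegral_congr_fun measurableSet_Ioi (fun s hs => ?_)
        rw [expSplit, innerIBP2 hx (le_of_lt hs) M, mul_add, mul_sub, ← expSplit, ← expSplit]
    _ = (∫ s in Set.Ioi (0:ℝ),
          ((∫ r in Set.Ioi (0:ℝ), Real.exp (-r - s) * ((r - s) * Pq x r s ^ (M+1)))
            - ∫ r in Set.Ioi (0:ℝ), Real.exp (-r - s) * Pq x r s ^ (M+1)))
        + ∫ t in Set.Ioi (0:ℝ), Real.exp (-t) * (t * ((2*x+t)^2)^(M+1)) :=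
        MeasureTheory.integral_add huv hG2
    _ = ((∫ s in Set.Ioi (0:ℝ), ∫ r in Set.Ioi (0:ℝ),
          Real.exp (-r - s) * ((r - s) * Pq x r s ^ (M+1)))
        - (∫ s in Set.Ioi (0:ℝ), ∫ r in Set.Ioi (0:ℝ),
          Real.exp (-r - s) * Pq x r s ^ (M+1)))
        + ∫ t in Set.Ioi (0:ℝ), Real.exp (-t) * (t * ((2*x+t)^2)^(M+1)) := by
        rw [MeasureTheory.integral_sub hu hv]
    _ = ((∫ p : ℝ × ℝ, Real.exp (-p.1 - p.2) * ((p.1 - p.2) * Pq x p.1 p.2 ^ (M+1))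
          ∂mu2)
        - (∫ p : ℝ × ℝ, Real.exp (-p.1 - p.2) * Pq x p.1 p.2 ^ (M+1)
          ∂mu2))
        + ∫ t in Set.Ioi (0:ℝ), Real.exp (-t) * (t * ((2*x+t)^2)^(M+1)) := by
        rw [← integral_prod_symm _ hZ, ← integral_prod_symm _ hA]

private lemma swap_eq {f g : ℝ × ℝ → ℝ} (h : ∀ p : ℝ × ℝ, g p = f p.swap) :
    ∫ p, g p ∂mu2 = ∫ p, f p ∂mu2 := by
  rw [show g = fun p => f p.swap from funext h]
  exact integral_prod_swap f

private lemma Pq_symm (x r s : ℝ) : Pq x s r = Pq x r s := by unfold Pq; ring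

private lemma swap1 {x : ℝ} (M : ℕ) :
    (∫ p : ℝ × ℝ, Real.exp (-p.1 - p.2) *
        (((M:ℝ)+1) * Pq x p.1 p.2 ^ M * (4*x - 2*(p.1-p.2))) ∂mu2)
      = ∫ p : ℝ × ℝ, Real.exp (-p.1 - p.2) *
        (((M:ℝ)+1) * Pq x p.1 p.2 ^ M * (4*x + 2*(p.1-p.2))) ∂mu2 := by
  refine swap_eq (fun p => ?_)
  simp only [Prod.fst_swap, Prod.snd_swap]
  rw [show -p.2 - p.1 = -p.1 - p.2 by ring, Pq_symm]
  ring

private lemma swap2 {x : ℝ} (M : ℕ) :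
    (∫ p : ℝ × ℝ, Real.exp (-p.1 - p.2) *
        ((p.1 - p.2) * (((M:ℝ)+1) * Pq x p.1 p.2 ^ M * (4*x - 2*(p.1-p.2)))) ∂mu2)
      = - ∫ p : ℝ × ℝ, Real.exp (-p.1 - p.2) *
        ((p.1 - p.2) * (((M:ℝ)+1) * Pq x p.1 p.2 ^ M * (4*x + 2*(p.1-p.2)))) ∂mu2 := by
  rw [← MeasureTheory.integral_neg]
  refine swap_eq (fun p => ?_)
  simp only [Prod.fst_swap, Prod.snd_swap]
  rw [show -p.2 - p.1 = -p.1 - p.2 by ring, Pq_symm]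
  ring

private lemma swapZ {x : ℝ} (M : ℕ) :
    (∫ p : ℝ × ℝ, Real.exp (-p.1 - p.2) * ((p.1 - p.2) * Pq x p.1 p.2 ^ (M+1)) ∂mu2) = 0 := by
  have h := swap_eq (g := fun p : ℝ × ℝ =>
      -(Real.exp (-p.1 - p.2) * ((p.1 - p.2) * Pq x p.1 p.2 ^ (M+1))))
    (f := fun p : ℝ × ℝ => Real.exp (-p.1 - p.2) * ((p.1 - p.2) * Pq x p.1 p.2 ^ (M+1)))
    (fun p => by
      simp only [Prod.fst_swap, Prod.snd_swap]
      rw [show -p.2 - p.1 = -p.1 - p.2 by ring, Pq_symm]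
      ring)
  rw [MeasureTheory.integral_neg] at h
  linarith [h]

private lemma eq1 {x : ℝ} (hx : 0 ≤ x) (M : ℕ) :
    8*x*((M:ℝ)+1) * (∫ p : ℝ × ℝ, Real.exp (-p.1 - p.2) * Pq x p.1 p.2 ^ M ∂mu2)
      = 2 * (∫ p : ℝ × ℝ, Real.exp (-p.1 - p.2) * Pq x p.1 p.2 ^ (M+1) ∂mu2)
        - 2 * ∫ t in Set.Ioi (0:ℝ), Real.exp (-t) * ((2*x+t)^2)^(M+1) := by
  have hK : Integrable (fun p : ℝ × ℝ => Real.exp (-p.1 - p.2) *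
      (((M:ℝ)+1) * Pq x p.1 p.2 ^ M * (4*x + 2*(p.1-p.2)))) mu2 :=
    int_congr (((atom2D hx 0 0 M).const_mul (4*x*((M:ℝ)+1))).add
      ((atom2D hx 1 0 M).const_mul (2*((M:ℝ)+1))))
      (fun p => by simp only [Pi.add_apply]; ring)
  have hK' : Integrable (fun p : ℝ × ℝ => Real.exp (-p.1 - p.2) *
      (((M:ℝ)+1) * Pq x p.1 p.2 ^ M * (4*x - 2*(p.1-p.2)))) mu2 :=
    int_congr (((atom2D hx 0 0 M).const_mul (4*x*((M:ℝ)+1))).add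
      ((atom2D hx 1 0 M).const_mul (-(2*((M:ℝ)+1)))))
      (fun p => by simp only [Pi.add_apply]; ring)
  calc 8*x*((M:ℝ)+1) * (∫ p : ℝ × ℝ, Real.exp (-p.1 - p.2) * Pq x p.1 p.2 ^ M ∂mu2)
      = ∫ p : ℝ × ℝ, 8*x*((M:ℝ)+1) * (Real.exp (-p.1 - p.2) * Pq x p.1 p.2 ^ M) ∂mu2 :=
        (integral_const_mul _ _).symm
    _ = ∫ p : ℝ × ℝ, (Real.exp (-p.1 - p.2) *
          (((M:ℝ)+1) * Pq x p.1 p.2 ^ M * (4*x + 2*(p.1-p.2)))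
        + Real.exp (-p.1 - p.2) *
          (((M:ℝ)+1) * Pq x p.1 p.2 ^ M * (4*x - 2*(p.1-p.2)))) ∂mu2 := by
        refine integral_congr_ae (ae_of_all _ fun p => ?_)
        ring
    _ = (∫ p : ℝ × ℝ, Real.exp (-p.1 - p.2) *
          (((M:ℝ)+1) * Pq x p.1 p.2 ^ M * (4*x + 2*(p.1-p.2))) ∂mu2)
        + ∫ p : ℝ × ℝ, Real.exp (-p.1 - p.2) *
          (((M:ℝ)+1) * Pq x p.1 p.2 ^ M * (4*x - 2*(p.1-p.2))) ∂mu2 :=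
        MeasureTheory.integral_add hK hK'
    _ = 2 * (∫ p : ℝ × ℝ, Real.exp (-p.1 - p.2) * Pq x p.1 p.2 ^ (M+1) ∂mu2)
        - 2 * ∫ t in Set.Ioi (0:ℝ), Real.exp (-t) * ((2*x+t)^2)^(M+1) := by
        rw [swap1, outer1 hx M]; ring

private lemma eq2 {x : ℝ} (hx : 0 ≤ x) (M : ℕ) :
    4*((M:ℝ)+1) * (∫ p : ℝ × ℝ, Real.exp (-p.1 - p.2) *
        ((p.1 - p.2)^2 * Pq x p.1 p.2 ^ M) ∂mu2)
      = 2 * (∫ t in Set.Ioi (0:ℝ), Real.exp (-t) * (t * ((2*x+t)^2)^(M+1)))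
        - 2 * (∫ p : ℝ × ℝ, Real.exp (-p.1 - p.2) * Pq x p.1 p.2 ^ (M+1) ∂mu2) := by
  have hJ : Integrable (fun p : ℝ × ℝ => Real.exp (-p.1 - p.2) *
      ((p.1 - p.2) * (((M:ℝ)+1) * Pq x p.1 p.2 ^ M * (4*x + 2*(p.1-p.2))))) mu2 :=
    int_congr (((atom2D hx 1 0 M).const_mul (4*x*((M:ℝ)+1))).add
      ((atom2D hx 2 0 M).const_mul (2*((M:ℝ)+1))))
      (fun p => by simp only [Pi.add_apply]; ring)
  have hJ' : Integrable (fun p : ℝ × ℝ => Real.exp (-p.1 - p.2) *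
      ((p.1 - p.2) * (((M:ℝ)+1) * Pq x p.1 p.2 ^ M * (4*x - 2*(p.1-p.2))))) mu2 :=
    int_congr (((atom2D hx 1 0 M).const_mul (4*x*((M:ℝ)+1))).add
      ((atom2D hx 2 0 M).const_mul (-(2*((M:ℝ)+1)))))
      (fun p => by simp only [Pi.add_apply]; ring)
  calc 4*((M:ℝ)+1) * (∫ p : ℝ × ℝ, Real.exp (-p.1 - p.2) *
        ((p.1 - p.2)^2 * Pq x p.1 p.2 ^ M) ∂mu2)
      = ∫ p : ℝ × ℝ, 4*((M:ℝ)+1) * (Real.exp (-p.1 - p.2) *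
          ((p.1 - p.2)^2 * Pq x p.1 p.2 ^ M)) ∂mu2 := (integral_const_mul _ _).symm
    _ = ∫ p : ℝ × ℝ, (Real.exp (-p.1 - p.2) *
          ((p.1 - p.2) * (((M:ℝ)+1) * Pq x p.1 p.2 ^ M * (4*x + 2*(p.1-p.2))))
        - Real.exp (-p.1 - p.2) *
          ((p.1 - p.2) * (((M:ℝ)+1) * Pq x p.1 p.2 ^ M * (4*x - 2*(p.1-p.2))))) ∂mu2 := by
        refine integral_congr_ae (ae_of_all _ fun p => ?_)
        ring
    _ = (∫ p : ℝ × ℝ, Real.exp (-p.1 - p.2) *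
          ((p.1 - p.2) * (((M:ℝ)+1) * Pq x p.1 p.2 ^ M * (4*x + 2*(p.1-p.2)))) ∂mu2)
        - ∫ p : ℝ × ℝ, Real.exp (-p.1 - p.2) *
          ((p.1 - p.2) * (((M:ℝ)+1) * Pq x p.1 p.2 ^ M * (4*x - 2*(p.1-p.2)))) ∂mu2 :=
        MeasureTheory.integral_sub hJ hJ'
    _ = 2 * (∫ t in Set.Ioi (0:ℝ), Real.exp (-t) * (t * ((2*x+t)^2)^(M+1)))
        - 2 * (∫ p : ℝ × ℝ, Real.exp (-p.1 - p.2) * Pq x p.1 p.2 ^ (M+1) ∂mu2) := by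
        rw [swap2, outer2 hx M, swapZ]; ring

private lemma eq3 {x : ℝ} (hx : 0 ≤ x) (M : ℕ) :
    4*x * (∫ p : ℝ × ℝ, Real.exp (-p.1 - p.2) * ((p.1 + p.2) * Pq x p.1 p.2 ^ M) ∂mu2)
      = (∫ p : ℝ × ℝ, Real.exp (-p.1 - p.2) * Pq x p.1 p.2 ^ (M+1) ∂mu2)
        - 4*x^2 * (∫ p : ℝ × ℝ, Real.exp (-p.1 - p.2) * Pq x p.1 p.2 ^ M ∂mu2)
        - ∫ p : ℝ × ℝ, Real.exp (-p.1 - p.2) * ((p.1 - p.2)^2 * Pq x p.1 p.2 ^ M) ∂mu2 := by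
  have hA : Integrable (fun p : ℝ × ℝ => Real.exp (-p.1 - p.2) * Pq x p.1 p.2 ^ (M+1)) mu2 :=
    int_congr (atom2D hx 0 0 (M+1)) (fun p => by ring)
  have hA' : Integrable (fun p : ℝ × ℝ => Real.exp (-p.1 - p.2) * Pq x p.1 p.2 ^ M) mu2 :=
    int_congr (atom2D hx 0 0 M) (fun p => by ring)
  have hB : Integrable (fun p : ℝ × ℝ =>
      Real.exp (-p.1 - p.2) * ((p.1 - p.2)^2 * Pq x p.1 p.2 ^ M)) mu2 :=
    int_congr (atom2D hx 2 0 M) (fun p => by ring)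
  have hrest : Integrable (fun p : ℝ × ℝ =>
      4*x^2 * (Real.exp (-p.1 - p.2) * Pq x p.1 p.2 ^ M)
      + Real.exp (-p.1 - p.2) * ((p.1 - p.2)^2 * Pq x p.1 p.2 ^ M)) mu2 :=
    (hA'.const_mul _).add hB
  calc 4*x * (∫ p : ℝ × ℝ, Real.exp (-p.1 - p.2) * ((p.1 + p.2) * Pq x p.1 p.2 ^ M) ∂mu2)
      = ∫ p : ℝ × ℝ, 4*x * (Real.exp (-p.1 - p.2) * ((p.1 + p.2) * Pq x p.1 p.2 ^ M)) ∂mu2 :=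
        (integral_const_mul _ _).symm
    _ = ∫ p : ℝ × ℝ, (Real.exp (-p.1 - p.2) * Pq x p.1 p.2 ^ (M+1)
          - (4*x^2 * (Real.exp (-p.1 - p.2) * Pq x p.1 p.2 ^ M)
            + Real.exp (-p.1 - p.2) * ((p.1 - p.2)^2 * Pq x p.1 p.2 ^ M))) ∂mu2 := by
        refine integral_congr_ae (ae_of_all _ fun p => ?_)
        show 4*x * (Real.exp (-p.1 - p.2) * ((p.1 + p.2) * Pq x p.1 p.2 ^ M)) = _
        unfold Pq
        ring
    _ = (∫ p : ℝ × ℝ, Real.exp (-p.1 - p.2) * Pq x p.1 p.2 ^ (M+1) ∂mu2)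
        - ∫ p : ℝ × ℝ, (4*x^2 * (Real.exp (-p.1 - p.2) * Pq x p.1 p.2 ^ M)
            + Real.exp (-p.1 - p.2) * ((p.1 - p.2)^2 * Pq x p.1 p.2 ^ M)) ∂mu2 :=
        MeasureTheory.integral_sub hA hrest
    _ = (∫ p : ℝ × ℝ, Real.exp (-p.1 - p.2) * Pq x p.1 p.2 ^ (M+1) ∂mu2)
        - 4*x^2 * (∫ p : ℝ × ℝ, Real.exp (-p.1 - p.2) * Pq x p.1 p.2 ^ M ∂mu2)
        - ∫ p : ℝ × ℝ, Real.exp (-p.1 - p.2) * ((p.1 - p.2)^2 * Pq x p.1 p.2 ^ M) ∂mu2 := by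
        rw [MeasureTheory.integral_add (hA'.const_mul _) hB, integral_const_mul]
        ring

private lemma eqG2 {x : ℝ} (hx : 0 ≤ x) (M : ℕ) :
    (∫ t in Set.Ioi (0:ℝ), Real.exp (-t) * (t * ((2*x+t)^2)^(M+1)))
      = (∫ t in Set.Ioi (0:ℝ), Real.exp (-t) * (2*x+t)^(2*M+3))
        - 2*x * ∫ t in Set.Ioi (0:ℝ), Real.exp (-t) * ((2*x+t)^2)^(M+1) := by
  have hH : IntegrableOn (fun t : ℝ => Real.exp (-t) * (2*x+t)^(2*M+3)) (Set.Ioi 0) :=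
    intOn_congr (atom1D (x:=0) (s:=0) le_rfl le_rfl (2*x) 0 (2*M+3) 0 0) (fun t => by ring)
  have hG : IntegrableOn (fun t : ℝ => Real.exp (-t) * ((2*x+t)^2)^(M+1)) (Set.Ioi 0) :=
    intOn_congr (atom1D (x:=0) (s:=0) le_rfl le_rfl (2*x) 0 (2*M+2) 0 0) (fun t => by
      rw [show (2*x+t)^(2*M+2) = ((2*x+t)^2)^(M+1) by
        rw [show 2*M+2 = 2*(M+1) from by ring, pow_mul]]; ring)
  calc (∫ t in Set.Ioi (0:ℝ), Real.exp (-t) * (t * ((2*x+t)^2)^(M+1)))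
      = ∫ t in Set.Ioi (0:ℝ), (Real.exp (-t) * (2*x+t)^(2*M+3)
          - 2*x * (Real.exp (-t) * ((2*x+t)^2)^(M+1))) := by
        refine integral_congr_ae (ae_of_all _ fun t => ?_)
        show Real.exp (-t) * (t * ((2*x+t)^2)^(M+1))
          = Real.exp (-t) * (2*x+t)^(2*M+3) - 2*x * (Real.exp (-t) * ((2*x+t)^2)^(M+1))
        rw [show (2*x+t)^(2*M+3) = ((2*x+t)^2)^(M+1) * (2*x+t) by
          rw [show 2*M+3 = 2*(M+1)+1 from by ring, pow_succ, pow_mul]]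
        ring
    _ = (∫ t in Set.Ioi (0:ℝ), Real.exp (-t) * (2*x+t)^(2*M+3))
        - ∫ t in Set.Ioi (0:ℝ), 2*x * (Real.exp (-t) * ((2*x+t)^2)^(M+1)) :=
        MeasureTheory.integral_sub hH (hG.const_mul _)
    _ = (∫ t in Set.Ioi (0:ℝ), Real.exp (-t) * (2*x+t)^(2*M+3))
        - 2*x * ∫ t in Set.Ioi (0:ℝ), Real.exp (-t) * ((2*x+t)^2)^(M+1) := by
        rw [integral_const_mul]

private lemma upperGamma_eq (x : ℝ) (m : ℕ) :
    upperGamma ((m:ℝ) + 1) (2*x)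
      = Real.exp (-(2*x)) * ∫ t in Set.Ioi (0:ℝ), Real.exp (-t) * (2*x+t)^m := by
  unfold upperGamma
  have h1 : (∫ u in Set.Ioi (2*x), u ^ ((m:ℝ) + 1 - 1) * Real.exp (-u))
      = ∫ u in Set.Ioi (2*x), u ^ m * Real.exp (-u) := by
    refine setIntegral_congr_fun measurableSet_Ioi (fun u _ => ?_)
    rw [show ((m:ℝ)+1-1) = (m:ℝ) by ring, Real.rpow_natCast]
  rw [h1]
  have h2 := (measurePreserving_add_right volume (2*x)).setIntegral_preimage_emb
    (measurableEmbedding_addRight (2*x)) (fun u => u ^ m * Real.exp (-u)) (Set.Ioi (2*x))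
  rw [show (fun u => u + 2*x) ⁻¹' Set.Ioi (2*x) = Set.Ioi 0 by
    rw [preimage_add_const_Ioi, sub_self]] at h2
  rw [← h2, ← integral_const_mul]
  refine integral_congr_ae (ae_of_all _ fun v => ?_)
  show (v + 2*x) ^ m * Real.exp (-(v + 2*x)) = Real.exp (-(2*x)) * (Real.exp (-v) * (2*x+v)^m)
  rw [show -(v + 2*x) = -(2*x) + -v by ring, Real.exp_add]
  ring

private lemma hasDerivAt_Pq_x (r s x : ℝ) :
    HasDerivAt (fun y => Pq y r s) (8*x + 4*(r+s)) x := by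
  rw [show (fun y => Pq y r s) = (fun y : ℝ => 4*y^2 + 4*(r+s)*y + (r-s)^2) from
    funext fun y => by unfold Pq; ring]
  have h := (((hasDerivAt_pow 2 x).const_mul (4:ℝ)).add
    ((hasDerivAt_id x).const_mul (4*(r+s)))).add_const ((r-s)^2)
  refine h.congr_deriv ?_
  push_cast
  ring

private lemma hasDerivAt_F (r s x : ℝ) (M : ℕ) :
    HasDerivAt (fun y => Real.exp (-r - s) * Pq y r s ^ (M+1))
      (Real.exp (-r - s) * (((M:ℝ)+1) * Pq x r s ^ M * (8*x + 4*(r+s)))) x := by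
  have h := ((hasDerivAt_Pq_x r s x).fun_pow (M+1)).const_mul (Real.exp (-r - s))
  refine h.congr_deriv ?_
  push_cast [Nat.add_sub_cancel]
  ring

private lemma deriv_main {x : ℝ} (hx : 0 < x) (M : ℕ) :
    HasDerivAt (fun y => ∫ p : ℝ × ℝ, Real.exp (-p.1 - p.2) * Pq y p.1 p.2 ^ (M+1) ∂mu2)
      (∫ p : ℝ × ℝ, Real.exp (-p.1 - p.2) *
        (((M:ℝ)+1) * Pq x p.1 p.2 ^ M * (8*x + 4*(p.1+p.2))) ∂mu2) x := by
  have hbint : Integrable (fun p : ℝ × ℝ => Real.exp (-p.1 - p.2) *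
      ((((M:ℝ)+1) * ((2*(2*x)+1)^2)^M * (8*(2*x)+4)) * ((1+p.1)*(1+p.2))^(2*M+1))) mu2 := by
    refine aux2D (g := fun r s => (((M:ℝ)+1) * ((2*(2*x)+1)^2)^M * (8*(2*x)+4))
        * ((1+r)*(1+s))^(2*M+1))
      (C := (((M:ℝ)+1) * ((2*(2*x)+1)^2)^M * (8*(2*x)+4))) (m := 2*M+1) ?_ ?_
    · fun_prop
    · intro r s hr hs
      beta_reduce
      rw [abs_of_nonneg (by positivity), mul_pow]
  have hd := hasDerivAt_integral_of_dominated_loc_of_deriv_le (μ := mu2)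
    (F := fun y (p : ℝ × ℝ) => Real.exp (-p.1 - p.2) * Pq y p.1 p.2 ^ (M+1))
    (F' := fun y (p : ℝ × ℝ) => Real.exp (-p.1 - p.2) *
      (((M:ℝ)+1) * Pq y p.1 p.2 ^ M * (8*y + 4*(p.1+p.2))))
    (bound := fun p : ℝ × ℝ => Real.exp (-p.1 - p.2) *
      ((((M:ℝ)+1) * ((2*(2*x)+1)^2)^M * (8*(2*x)+4)) * ((1+p.1)*(1+p.2))^(2*M+1)))
    (Metric.ball_mem_nhds x (half_pos hx))
    (Eventually.of_forall fun y => (Continuous.aestronglyMeasurable (by unfold Pq; fun_prop)))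
    (int_congr (atom2D hx.le 0 0 (M+1)) (fun p => by ring))
    (Continuous.aestronglyMeasurable (by unfold Pq; fun_prop))
    ?_ hbint ?_
  · exact hd.2
  · -- bound
    unfold mu2
    rw [Measure.prod_restrict]
    filter_upwards [ae_restrict_mem (measurableSet_Ioi.prod measurableSet_Ioi)] with p hp
    obtain ⟨hr, hs⟩ : p.1 ∈ Set.Ioi (0:ℝ) ∧ p.2 ∈ Set.Ioi (0:ℝ) := hp
    have hr' : (0:ℝ) < p.1 := hr
    have hs' : (0:ℝ) < p.2 := hs
    intro y hy
    rw [Metric.mem_ball, Real.dist_eq] at hy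
    obtain ⟨hy1, hy2⟩ := abs_lt.mp hy
    have hy0 : 0 ≤ y := by linarith
    have hyB : y ≤ 2*x := by linarith
    have hT1 : (1:ℝ) ≤ (1+p.1)*(1+p.2) := by nlinarith [mul_nonneg hr'.le hs'.le]
    have hPn := Pq_nonneg hy0 hr'.le hs'.le
    have h8 : 0 ≤ 8*y + 4*(p.1+p.2) := by nlinarith
    rw [Real.norm_eq_abs, abs_of_nonneg (mul_nonneg (Real.exp_pos _).le
      (mul_nonneg (mul_nonneg (by positivity) (pow_nonneg hPn M)) h8))]
    have hPb : Pq y p.1 p.2 ^ M ≤ ((2*(2*x)+1)^2)^M * ((1+p.1)*(1+p.2))^(2*M) :=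
      Pq_pow_le hy0 hyB hr'.le hs'.le M
    have h8b : 8*y + 4*(p.1+p.2) ≤ (8*(2*x)+4) * ((1+p.1)*(1+p.2)) := by
      nlinarith [mul_nonneg hr'.le hs'.le]
    calc Real.exp (-p.1 - p.2) * (((M:ℝ)+1) * Pq y p.1 p.2 ^ M * (8*y + 4*(p.1+p.2)))
        ≤ Real.exp (-p.1 - p.2) * (((M:ℝ)+1) * (((2*(2*x)+1)^2)^M * ((1+p.1)*(1+p.2))^(2*M))
            * ((8*(2*x)+4) * ((1+p.1)*(1+p.2)))) := by
          refine mul_le_mul_of_nonneg_left ?_ (Real.exp_pos _).le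
          exact mul_le_mul (mul_le_mul_of_nonneg_left hPb (by positivity)) h8b h8
            (by positivity)
      _ = Real.exp (-p.1 - p.2) *
          ((((M:ℝ)+1) * ((2*(2*x)+1)^2)^M * (8*(2*x)+4)) * ((1+p.1)*(1+p.2))^(2*M+1)) := by
          rw [pow_succ]
          ring
  · -- differentiability
    refine Eventually.of_forall fun p y _ => ?_
    exact hasDerivAt_F p.1 p.2 y M

theorem statement4 (N : ℕ) (hN : 1 ≤ N) :
    ∀ x ∈ Set.Ioi (0 : ℝ),
      HasDerivAt (fAII N)
        ((1 + (N : ℝ) / x + 1 / (2 * x)) * fAII N x -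
          (1 / (2 * x)) * Real.exp (2 * x) * upperGamma (2 * N + 2) (2 * x)) x := by
  obtain ⟨M, rfl⟩ : ∃ M, N = M + 1 := ⟨N - 1, (Nat.succ_pred_eq_of_pos hN).symm⟩
  intro x hx
  have hx' : (0:ℝ) < x := hx
  have hx0 : x ≠ 0 := ne_of_gt hx'
  have hEq : fAII (M+1) =ᶠ[nhds x]
      (fun y => ∫ p : ℝ × ℝ, Real.exp (-p.1 - p.2) * Pq y p.1 p.2 ^ (M+1) ∂mu2) := by
    filter_upwards [Ioi_mem_nhds hx'] with y hy
    have hint : Integrable (fun p : ℝ × ℝ =>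
        Real.exp (-p.1 - p.2) * Pq y p.1 p.2 ^ (M+1)) mu2 :=
      int_congr (atom2D (le_of_lt hy) 0 0 (M+1)) (fun p => by ring)
    have h2 : (∫ p : ℝ × ℝ, Real.exp (-p.1 - p.2) * Pq y p.1 p.2 ^ (M+1) ∂mu2)
        = ∫ r in Set.Ioi (0:ℝ), ∫ s in Set.Ioi (0:ℝ),
            Real.exp (-r - s) * Pq y r s ^ (M+1) := integral_prod _ hint
    show fAII (M+1) y = _
    rw [h2]
    unfold fAII Pq
    rfl
  have hDer : HasDerivAt (fAII (M+1))
      (∫ p : ℝ × ℝ, Real.exp (-p.1 - p.2) *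
        (((M:ℝ)+1) * Pq x p.1 p.2 ^ M * (8*x + 4*(p.1+p.2))) ∂mu2) x :=
    (deriv_main hx' M).congr_of_eventuallyEq hEq
  have hfx : fAII (M+1) x
      = ∫ p : ℝ × ℝ, Real.exp (-p.1 - p.2) * Pq x p.1 p.2 ^ (M+1) ∂mu2 :=
    hEq.eq_of_nhds
  have hA' : Integrable (fun p : ℝ × ℝ => Real.exp (-p.1 - p.2) * Pq x p.1 p.2 ^ M) mu2 :=
    int_congr (atom2D hx'.le 0 0 M) (fun p => by ring)
  have hD : Integrable (fun p : ℝ × ℝ =>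
      Real.exp (-p.1 - p.2) * ((p.1 + p.2) * Pq x p.1 p.2 ^ M)) mu2 :=
    int_congr (atom2D hx'.le 0 1 M) (fun p => by ring)
  have hdval : (∫ p : ℝ × ℝ, Real.exp (-p.1 - p.2) *
        (((M:ℝ)+1) * Pq x p.1 p.2 ^ M * (8*x + 4*(p.1+p.2))) ∂mu2)
      = 8*x*((M:ℝ)+1) * (∫ p : ℝ × ℝ, Real.exp (-p.1 - p.2) * Pq x p.1 p.2 ^ M ∂mu2)
        + 4*((M:ℝ)+1) * (∫ p : ℝ × ℝ, Real.exp (-p.1 - p.2) *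
            ((p.1 + p.2) * Pq x p.1 p.2 ^ M) ∂mu2) := by
    calc (∫ p : ℝ × ℝ, Real.exp (-p.1 - p.2) *
          (((M:ℝ)+1) * Pq x p.1 p.2 ^ M * (8*x + 4*(p.1+p.2))) ∂mu2)
        = ∫ p : ℝ × ℝ, (8*x*((M:ℝ)+1) * (Real.exp (-p.1 - p.2) * Pq x p.1 p.2 ^ M)
            + 4*((M:ℝ)+1) * (Real.exp (-p.1 - p.2) *
              ((p.1 + p.2) * Pq x p.1 p.2 ^ M))) ∂mu2 :=
          integral_congr_ae (ae_of_all _ fun p => by ring)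
      _ = _ := by
          rw [MeasureTheory.integral_add (hA'.const_mul _) (hD.const_mul _),
            integral_const_mul, integral_const_mul]
  have e1 := eq1 hx'.le M
  have e2 := eq2 hx'.le M
  have e3 := eq3 hx'.le M
  have eg2 := eqG2 hx'.le M
  have hug : Real.exp (2*x) * upperGamma (2 * ((M:ℝ)+1) + 2) (2*x)
      = ∫ t in Set.Ioi (0:ℝ), Real.exp (-t) * (2*x+t)^(2*M+3) := by
    have h := upperGamma_eq x (2*M+3)
    rw [show ((2*M+3 : ℕ):ℝ) + 1 = 2*((M:ℝ)+1) + 2 by push_cast; ring] at h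
    rw [h, ← mul_assoc, ← Real.exp_add]
    simp
  set IA1 := ∫ p : ℝ × ℝ, Real.exp (-p.1 - p.2) * Pq x p.1 p.2 ^ (M+1) ∂mu2 with hIA1
  set IA0 := ∫ p : ℝ × ℝ, Real.exp (-p.1 - p.2) * Pq x p.1 p.2 ^ M ∂mu2 with hIA0
  set IB := ∫ p : ℝ × ℝ, Real.exp (-p.1 - p.2) * ((p.1 - p.2)^2 * Pq x p.1 p.2 ^ M) ∂mu2
    with hIB
  set ID := ∫ p : ℝ × ℝ, Real.exp (-p.1 - p.2) * ((p.1 + p.2) * Pq x p.1 p.2 ^ M) ∂mu2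
    with hID
  set IG := ∫ t in Set.Ioi (0:ℝ), Real.exp (-t) * ((2*x+t)^2)^(M+1) with hIG
  set IG2 := ∫ t in Set.Ioi (0:ℝ), Real.exp (-t) * (t * ((2*x+t)^2)^(M+1)) with hIG2
  set IH := ∫ t in Set.Ioi (0:ℝ), Real.exp (-t) * (2*x+t)^(2*M+3) with hIH
  convert hDer using 1
  rw [hdval, hfx]
  rw [show (2 * (↑(M+1):ℝ) + 2) = 2*((M:ℝ)+1) + 2 by push_cast; ring]
  rw [mul_assoc (1/(2*x)), hug]
  push_cast
  rw [show (1 + ((M:ℝ)+1)/x + 1/(2*x)) * IA1 - 1/(2*x) * IH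
      = ((2*x + 2*((M:ℝ)+1) + 1) * IA1 - IH)/(2*x) from by field_simp,
    div_eq_iff (show (2*x) ≠ 0 by positivity)]
  linear_combination (-x)*e1 + (1/2)*e2 - (2*((M:ℝ)+1))*e3 + eg2
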